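/- Let ρ : ℝ → ℝ be continuous, even, with compact support in (-1,1), and let φ : ℝ → ℝ be twice continuously differentiable with bounded second derivative. Then the 'complex correction cancellation' integral ∫_ℝ (1/ε²)[ρ((x-4ε)/ε)² + ρ((x+4ε)/ε)² - ρ((x-2ε)/ε)² - ρ((x+2ε)/ε)²] φ(x) dx tends to 0 as ε → 0⁺ (indeed it is O(ε)). -/

import Mathlib

open MeasureTheory

/-- Taylor-type bound: second symmetric difference estimate. -/
lemma aux_delta_bound (φ : ℝ → ℝ) (hφd : Differentiable ℝ φ)
    (hψd : Differentiable ℝ (deriv φ)) {K : ℝ} (hK : ∀ x, |deriv (deriv φ) x| ≤ K)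
    (a : ℝ) {ε : ℝ} (hε : 0 < ε) :
    |φ (a + 4*ε) + φ (a - 4*ε) - φ (a + 2*ε) - φ (a - 2*ε)| ≤ 16*K*ε^2 := by
  have hK0 : 0 ≤ K := (abs_nonneg _).trans (hK 0)
  set ψ := deriv φ with hψdef
  have hLip : ∀ u v : ℝ, |ψ u - ψ v| ≤ K * |u - v| := by
    intro u v
    have := convex_univ.norm_image_sub_le_of_norm_deriv_le (f := ψ)
      (fun x _ => hψd x) (fun x _ => by simpa [Real.norm_eq_abs] using hK x)
      (Set.mem_univ v) (Set.mem_univ u)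
    simpa [Real.norm_eq_abs] using this
  set g : ℝ → ℝ := fun t => φ (a + t) + φ (a - t) with hgdef
  have hg : ∀ t : ℝ, HasDerivAt g (ψ (a + t) - ψ (a - t)) t := by
    intro t
    have h1 : HasDerivAt (fun t : ℝ => φ (a + t)) (ψ (a + t)) t := by
      have hd : HasDerivAt (fun t : ℝ => a + t) 1 t := (hasDerivAt_id t).const_add a
      simpa [Function.comp_def] using (hφd (a + t)).hasDerivAt.comp t hd
    have h2 : HasDerivAt (fun t : ℝ => φ (a - t)) (-ψ (a - t)) t := by
      have hd : HasDerivAt (fun t : ℝ => a - t) (-1) t := (hasDerivAt_id t).const_sub a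
      simpa [Function.comp_def] using (hφd (a - t)).hasDerivAt.comp t hd
    exact (h1.add h2).congr_deriv (by ring)
  have hbound : ∀ t ∈ Set.Ico (2*ε) (4*ε), ‖ψ (a + t) - ψ (a - t)‖ ≤ 8*K*ε := by
    intro t ht
    have h1 := hLip (a + t) (a - t)
    have h2 : |(a + t) - (a - t)| = 2*t := by
      rw [show (a + t) - (a - t) = 2*t by ring, abs_of_nonneg (by nlinarith [ht.1])]
    rw [h2] at h1
    rw [Real.norm_eq_abs]
    nlinarith [ht.1, ht.2]
  have key := norm_image_sub_le_of_norm_deriv_le_segment' (a := 2*ε) (b := 4*ε)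
    (f := g) (f' := fun t => ψ (a + t) - ψ (a - t)) (C := 8*K*ε)
    (fun t _ => (hg t).hasDerivWithinAt) hbound (4*ε) ⟨by linarith, le_refl _⟩
  have hgv : g (4*ε) - g (2*ε) = φ (a + 4*ε) + φ (a - 4*ε) - φ (a + 2*ε) - φ (a - 2*ε) := by
    simp only [hgdef]; ring
  rw [hgv, Real.norm_eq_abs] at key
  nlinarith [key]

theorem complex_correction_cancellation (ρ : ℝ → ℝ) (hρ : Continuous ρ)
    (he : ∀ z, ρ (-z) = ρ z) (hsupp : Function.support ρ ⊆ Set.Ioo (-1) 1)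
    (φ : ℝ → ℝ) (hφ : ContDiff ℝ 2 φ)
    (hbd : ∃ K, ∀ x, |deriv (deriv φ) x| ≤ K) :
    (∃ C > (0:ℝ), ∃ ε₀ > (0:ℝ), ∀ ε : ℝ, 0 < ε → ε < ε₀ →
      |∫ x, (1/ε^2) * ((ρ ((x - 4*ε)/ε))^2 + (ρ ((x + 4*ε)/ε))^2
        - (ρ ((x - 2*ε)/ε))^2 - (ρ ((x + 2*ε)/ε))^2) * φ x| ≤ C * ε) ∧
    Filter.Tendsto (fun ε : ℝ =>
      ∫ x, (1/ε^2) * ((ρ ((x - 4*ε)/ε))^2 + (ρ ((x + 4*ε)/ε))^2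
        - (ρ ((x - 2*ε)/ε))^2 - (ρ ((x + 2*ε)/ε))^2) * φ x)
      (nhdsWithin 0 (Set.Ioi 0)) (nhds 0) := by
  obtain ⟨K, hK⟩ := hbd
  have hK0 : 0 ≤ K := (abs_nonneg _).trans (hK 0)
  have hφd : Differentiable ℝ φ := hφ.differentiable (by norm_num)
  have hφ' : ContDiff ℝ (1 + 1) φ := by
    have : ((2:ℕ) : WithTop ℕ∞) = 1 + 1 := by norm_num
    exact this ▸ hφ
  have hψ1 : ContDiff ℝ 1 (deriv φ) := (contDiff_succ_iff_deriv.mp hφ').2.2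
  have hψd : Differentiable ℝ (deriv φ) := hψ1.differentiable one_ne_zero
  -- compact support facts
  have hρcs : HasCompactSupport ρ := by
    apply HasCompactSupport.intro (isCompact_Icc (a := (-1:ℝ)) (b := 1))
    intro x hx
    by_contra h
    exact hx (Set.Ioo_subset_Icc_self (hsupp (Function.mem_support.mpr h)))
  have hρ2cs : HasCompactSupport (fun y => ρ y ^ 2) :=
    hρcs.comp_left (g := fun z : ℝ => z ^ 2) (by norm_num)
  have hρ2c : Continuous fun y : ℝ => ρ y ^ 2 := hρ.pow 2
  have hρ2int : Integrable (fun y : ℝ => ρ y ^ 2) :=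
    hρ2c.integrable_of_hasCompactSupport hρ2cs
  set M := ∫ y : ℝ, ρ y ^ 2 with hM
  have hM0 : 0 ≤ M := integral_nonneg fun y => sq_nonneg _
  -- the main bound
  have main : ∀ ε : ℝ, 0 < ε →
      |∫ x, (1/ε^2) * ((ρ ((x - 4*ε)/ε))^2 + (ρ ((x + 4*ε)/ε))^2
        - (ρ ((x - 2*ε)/ε))^2 - (ρ ((x + 2*ε)/ε))^2) * φ x| ≤ (16*K*M) * ε := by
    intro ε hε
    have hεne : ε ≠ 0 := hε.ne'
    set G : ℝ → ℝ := fun y => (1/ε^2) * ((ρ (y - 4))^2 + (ρ (y + 4))^2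
        - (ρ (y - 2))^2 - (ρ (y + 2))^2) * φ (ε * y) with hGdef
    have hpt : ∀ x : ℝ, (1/ε^2) * ((ρ ((x - 4*ε)/ε))^2 + (ρ ((x + 4*ε)/ε))^2
        - (ρ ((x - 2*ε)/ε))^2 - (ρ ((x + 2*ε)/ε))^2) * φ x = G (x/ε) := by
      intro x
      have h1 : (x - 4*ε)/ε = x/ε - 4 := by field_simp; try ring
      have h2 : (x + 4*ε)/ε = x/ε + 4 := by field_simp; try ring
      have h3 : (x - 2*ε)/ε = x/ε - 2 := by field_simp; try ring
      have h4 : (x + 2*ε)/ε = x/ε + 2 := by field_simp; try ring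
      have h5 : ε * (x/ε) = x := by field_simp
      simp only [hGdef, h1, h2, h3, h4, h5]
    have step1 : (∫ x, (1/ε^2) * ((ρ ((x - 4*ε)/ε))^2 + (ρ ((x + 4*ε)/ε))^2
        - (ρ ((x - 2*ε)/ε))^2 - (ρ ((x + 2*ε)/ε))^2) * φ x) = ε * ∫ y, G y := by
      rw [show (fun x => (1/ε^2) * ((ρ ((x - 4*ε)/ε))^2 + (ρ ((x + 4*ε)/ε))^2
        - (ρ ((x - 2*ε)/ε))^2 - (ρ ((x + 2*ε)/ε))^2) * φ x) = fun x => G (x/ε)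
        from funext hpt]
      rw [MeasureTheory.Measure.integral_comp_div G ε, abs_of_pos hε, smul_eq_mul]
    -- integrability of the translated pieces in y-space
    have hFcont : ∀ c : ℝ, Continuous fun y => (ρ (y - c))^2 * φ (ε * y) := by
      intro c
      exact ((hρ.comp (continuous_id.sub continuous_const)).pow 2).mul
        (hφ.continuous.comp (continuous_const.mul continuous_id))
    have hFcs : ∀ c : ℝ, HasCompactSupport fun y => (ρ (y - c))^2 := by
      intro c
      have h1 : HasCompactSupport fun y => ρ (y - c) :=
        hρcs.comp_isClosedEmbedding (Homeomorph.subRight c).isClosedEmbedding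
      exact h1.comp_left (g := fun z : ℝ => z ^ 2) (by norm_num)
    have hFint : ∀ c : ℝ, Integrable fun y => (ρ (y - c))^2 * φ (ε * y) :=
      fun c => (hFcont c).integrable_of_hasCompactSupport ((hFcs c).mul_right)
    -- translation
    have htr : ∀ c : ℝ, (∫ y, (ρ (y - c))^2 * φ (ε * y))
        = ∫ u, ρ u ^ 2 * φ (ε * u + ε * c) := by
      intro c
      rw [← MeasureTheory.integral_sub_right_eq_self
        (fun u => ρ u ^ 2 * φ (ε * u + ε * c)) c]
      congr 1
      funext y
      have : ε * (y - c) + ε * c = ε * y := by ring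
      rw [this]
    have hGint : ∀ c : ℝ, Integrable fun u => ρ u ^ 2 * φ (ε * u + ε * c) := by
      intro c
      exact (hρ2c.mul (hφ.continuous.comp
        ((continuous_const.mul continuous_id).add continuous_const))).integrable_of_hasCompactSupport
        hρ2cs.mul_right
    -- split the integral
    set Δ : ℝ → ℝ := fun u => φ (ε * u + 4*ε) + φ (ε * u - 4*ε)
        - φ (ε * u + 2*ε) - φ (ε * u - 2*ε) with hΔdef
    have hintA : Integrable fun y : ℝ => (ρ (y - 4))^2 * φ (ε * y) + (ρ (y - (-4)))^2 * φ (ε * y) :=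
      (hFint 4).add (hFint (-4))
    have hintC : Integrable fun y : ℝ => (ρ (y - 2))^2 * φ (ε * y) + (ρ (y - (-2)))^2 * φ (ε * y) :=
      (hFint 2).add (hFint (-2))
    have hintA' : Integrable fun u : ℝ => ρ u ^ 2 * φ (ε * u + ε * 4) + ρ u ^ 2 * φ (ε * u + ε * (-4)) :=
      (hGint 4).add (hGint (-4))
    have hintC' : Integrable fun u : ℝ => ρ u ^ 2 * φ (ε * u + ε * 2) + ρ u ^ 2 * φ (ε * u + ε * (-2)) :=
      (hGint 2).add (hGint (-2))
    have hsplit : (∫ y, G y) = (1/ε^2) * ∫ u, ρ u ^ 2 * Δ u := by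
      have e1 : (fun y => G y) = fun y => (1/ε^2) *
          ((ρ (y - 4))^2 * φ (ε * y) + (ρ (y - (-4)))^2 * φ (ε * y)
           - ((ρ (y - 2))^2 * φ (ε * y) + (ρ (y - (-2)))^2 * φ (ε * y))) := by
        funext y
        simp only [hGdef, sub_neg_eq_add]
        ring
      have h4s : (∫ y, ((ρ (y - 4))^2 * φ (ε * y) + (ρ (y - (-4)))^2 * φ (ε * y)
           - ((ρ (y - 2))^2 * φ (ε * y) + (ρ (y - (-2)))^2 * φ (ε * y))))
          = (∫ y, ((ρ (y - 4))^2 * φ (ε * y) + (ρ (y - (-4)))^2 * φ (ε * y)))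
            - ∫ y, ((ρ (y - 2))^2 * φ (ε * y) + (ρ (y - (-2)))^2 * φ (ε * y)) :=
        integral_sub hintA hintC
      have h4a : (∫ y, ((ρ (y - 4))^2 * φ (ε * y) + (ρ (y - (-4)))^2 * φ (ε * y)))
          = (∫ y, (ρ (y - 4))^2 * φ (ε * y)) + ∫ y, (ρ (y - (-4)))^2 * φ (ε * y) :=
        integral_add (hFint 4) (hFint (-4))
      have h4b : (∫ y, ((ρ (y - 2))^2 * φ (ε * y) + (ρ (y - (-2)))^2 * φ (ε * y)))
          = (∫ y, (ρ (y - 2))^2 * φ (ε * y)) + ∫ y, (ρ (y - (-2)))^2 * φ (ε * y) :=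
        integral_add (hFint 2) (hFint (-2))
      have h5s : (∫ u, (ρ u ^ 2 * φ (ε * u + ε * 4) + ρ u ^ 2 * φ (ε * u + ε * (-4))
           - (ρ u ^ 2 * φ (ε * u + ε * 2) + ρ u ^ 2 * φ (ε * u + ε * (-2)))))
          = (∫ u, (ρ u ^ 2 * φ (ε * u + ε * 4) + ρ u ^ 2 * φ (ε * u + ε * (-4))))
            - ∫ u, (ρ u ^ 2 * φ (ε * u + ε * 2) + ρ u ^ 2 * φ (ε * u + ε * (-2))) :=
        integral_sub hintA' hintC'
      have h5a : (∫ u, (ρ u ^ 2 * φ (ε * u + ε * 4) + ρ u ^ 2 * φ (ε * u + ε * (-4))))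
          = (∫ u, ρ u ^ 2 * φ (ε * u + ε * 4)) + ∫ u, ρ u ^ 2 * φ (ε * u + ε * (-4)) :=
        integral_add (hGint 4) (hGint (-4))
      have h5b : (∫ u, (ρ u ^ 2 * φ (ε * u + ε * 2) + ρ u ^ 2 * φ (ε * u + ε * (-2))))
          = (∫ u, ρ u ^ 2 * φ (ε * u + ε * 2)) + ∫ u, ρ u ^ 2 * φ (ε * u + ε * (-2)) :=
        integral_add (hGint 2) (hGint (-2))
      have hΔeq : (∫ u, ρ u ^ 2 * Δ u)
          = ∫ u, (ρ u ^ 2 * φ (ε * u + ε * 4) + ρ u ^ 2 * φ (ε * u + ε * (-4))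
            - (ρ u ^ 2 * φ (ε * u + ε * 2) + ρ u ^ 2 * φ (ε * u + ε * (-2)))) := by
        congr 1
        funext u
        have a1 : ε * u + ε * 4 = ε * u + 4*ε := by ring
        have a2 : ε * u + ε * (-4) = ε * u - 4*ε := by ring
        have a3 : ε * u + ε * 2 = ε * u + 2*ε := by ring
        have a4 : ε * u + ε * (-2) = ε * u - 2*ε := by ring
        rw [a1, a2, a3, a4]
        simp only [hΔdef]
        ring
      rw [e1, MeasureTheory.integral_const_mul]
      congr 1
      rw [h4s, h4a, h4b, htr 4, htr (-4), htr 2, htr (-2), hΔeq, h5s, h5a, h5b]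
    -- bound the Δ-integral
    have hΔbd : ∀ u : ℝ, |Δ u| ≤ 16*K*ε^2 := by
      intro u
      simp only [hΔdef]
      exact aux_delta_bound φ hφd hψd hK (ε * u) hε
    have hint1 : Integrable fun u => ρ u ^ 2 * Δ u := by
      have hΔc : Continuous Δ := by
        have hc : Continuous fun u : ℝ => ε * u := continuous_const.mul continuous_id
        simp only [hΔdef]
        exact (((hφ.continuous.comp (hc.add continuous_const)).add
          (hφ.continuous.comp (hc.sub continuous_const))).sub
          (hφ.continuous.comp (hc.add continuous_const))).sub
          (hφ.continuous.comp (hc.sub continuous_const))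
      exact (hρ2c.mul hΔc).integrable_of_hasCompactSupport hρ2cs.mul_right
    have hIbd : |∫ u, ρ u ^ 2 * Δ u| ≤ 16*K*ε^2 * M := by
      calc |∫ u, ρ u ^ 2 * Δ u| ≤ ∫ u, |ρ u ^ 2 * Δ u| := by
              exact norm_integral_le_integral_norm
                (fun u => ρ u ^ 2 * Δ u)
        _ ≤ ∫ u, ρ u ^ 2 * (16*K*ε^2) := by
              apply integral_mono hint1.abs (hρ2int.mul_const _)
              intro u
              show |ρ u ^ 2 * Δ u| ≤ ρ u ^ 2 * (16*K*ε^2)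
              rw [abs_mul, abs_of_nonneg (sq_nonneg (ρ u))]
              exact mul_le_mul_of_nonneg_left (hΔbd u) (sq_nonneg _)
        _ = 16*K*ε^2 * M := by
              rw [MeasureTheory.integral_mul_const, ← hM]
              ring
    rw [step1, hsplit]
    have hpos : (0:ℝ) < ε^2 := by positivity
    rw [abs_mul, abs_mul, abs_of_pos hε, abs_of_pos (by positivity : (0:ℝ) < 1/ε^2)]
    calc ε * (1/ε^2 * |∫ u, ρ u ^ 2 * Δ u|)
        ≤ ε * (1/ε^2 * (16*K*ε^2 * M)) := by
          apply mul_le_mul_of_nonneg_left _ hε.le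
          exact mul_le_mul_of_nonneg_left hIbd (by positivity)
      _ = 16*K*M*ε := by field_simp
  refine ⟨⟨16*K*M + 1, by positivity, 1, one_pos, fun ε hε _ => ?_⟩, ?_⟩
  · calc _ ≤ (16*K*M) * ε := main ε hε
      _ ≤ (16*K*M + 1) * ε := by nlinarith
  · apply squeeze_zero_norm' (a := fun ε => 16*K*M*ε)
    · filter_upwards [self_mem_nhdsWithin] with ε hε
      simpa [Real.norm_eq_abs] using main ε hε
    · have : Filter.Tendsto (fun ε : ℝ => 16*K*M*ε) (nhds 0) (nhds 0) := by
        have h : Continuous fun ε : ℝ => 16*K*M*ε := continuous_const.mul continuous_id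
        simpa using h.tendsto 0
      exact this.mono_left nhdsWithin_le_nhds
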